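/- Let σ, k, m, c be real numbers with k ≠ 0, let I ⊆ ℝ be an open set, and let Φ : ℝ → ℝ be differentiable on I with Φ'(ξ) = σ + Φ(ξ)² for all ξ ∈ I. Define u(x,y,t) = (m² - 8σk⁴ - kc)/(6k²) - 2k²·Φ(ct + kx + my)². Then u satisfies the Kadomtsev–Petviashvili equation u_{yy} = ∂/∂x (u_t + 6·u·u_x + u_{xxx}) at every point (x,y,t) with ct + kx + my ∈ I. -/

import Mathlib

set_option maxHeartbeats 2000000 in
/-- If Φ solves the Riccati equation Φ' = σ + Φ² on an open set I and k ≠ 0, then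
u(x,y,t) = (m²-8σk⁴-kc)/(6k²) - 2k²·Φ(ct+kx+my)² satisfies the KP equation
u_{yy} = ∂/∂x (u_t + 6·u·u_x + u_{xxx}) at every point with ct+kx+my ∈ I. -/
theorem riccati_solution_of_KP (σ k m c : ℝ) (hk : k ≠ 0)
    (I : Set ℝ) (hI : IsOpen I) (Φ : ℝ → ℝ)
    (hΦ : ∀ ξ ∈ I, HasDerivAt Φ (σ + Φ ξ ^ 2) ξ)
    (u : ℝ → ℝ → ℝ → ℝ)
    (hu : ∀ x y t : ℝ,
      u x y t = (m ^ 2 - 8 * σ * k ^ 4 - k * c) / (6 * k ^ 2)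
        - 2 * k ^ 2 * Φ (c * t + k * x + m * y) ^ 2) :
    ∀ x y t : ℝ, c * t + k * x + m * y ∈ I →
      deriv (deriv (fun y' : ℝ => u x y' t)) y =
        deriv (fun x' : ℝ =>
          deriv (fun t' : ℝ => u x' y t') t
            + 6 * u x' y t * deriv (fun x'' : ℝ => u x'' y t) x'
            + deriv (deriv (deriv (fun x'' : ℝ => u x'' y t))) x') x := by
  intro x y t hmem
  -- polynomial-in-Φ functions and their derivatives on I
  have hd0 : ∀ ξ ∈ I, HasDerivAt
      (fun ξ => (m ^ 2 - 8 * σ * k ^ 4 - k * c) / (6 * k ^ 2) - 2 * k ^ 2 * Φ ξ ^ 2)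
      (-4 * k ^ 2 * (σ * Φ ξ + Φ ξ ^ 3)) ξ := by
    intro ξ hξ
    have h := hΦ ξ hξ
    have := ((h.pow 2).const_mul (2 * k ^ 2)).const_sub
      ((m ^ 2 - 8 * σ * k ^ 4 - k * c) / (6 * k ^ 2))
    refine this.congr_deriv ?_
    ring
  have hd1 : ∀ ξ ∈ I, HasDerivAt (fun ξ => -4 * k ^ 2 * (σ * Φ ξ + Φ ξ ^ 3))
      (-4 * k ^ 2 * (σ ^ 2 + 4 * σ * Φ ξ ^ 2 + 3 * Φ ξ ^ 4)) ξ := by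
    intro ξ hξ
    have h := hΦ ξ hξ
    have := ((h.const_mul σ).add (h.pow 3)).const_mul (-4 * k ^ 2)
    refine this.congr_deriv ?_
    ring
  have hd2 : ∀ ξ ∈ I, HasDerivAt (fun ξ => -4 * k ^ 2 * (σ ^ 2 + 4 * σ * Φ ξ ^ 2 + 3 * Φ ξ ^ 4))
      (-4 * k ^ 2 * (8 * σ ^ 2 * Φ ξ + 20 * σ * Φ ξ ^ 3 + 12 * Φ ξ ^ 5)) ξ := by
    intro ξ hξ
    have h := hΦ ξ hξ
    have := ((((h.pow 2).const_mul (4 * σ)).const_add (σ ^ 2)).add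
      ((h.pow 4).const_mul 3)).const_mul (-4 * k ^ 2)
    refine this.congr_deriv ?_
    ring
  have hd3 : ∀ ξ ∈ I, HasDerivAt
      (fun ξ => -4 * k ^ 2 * (8 * σ ^ 2 * Φ ξ + 20 * σ * Φ ξ ^ 3 + 12 * Φ ξ ^ 5))
      (-4 * k ^ 2 * (8 * σ ^ 3 + 68 * σ ^ 2 * Φ ξ ^ 2 + 120 * σ * Φ ξ ^ 4 + 60 * Φ ξ ^ 6)) ξ := by
    intro ξ hξ
    have h := hΦ ξ hξ
    have := (((h.const_mul (8 * σ ^ 2)).add ((h.pow 3).const_mul (20 * σ))).add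
      ((h.pow 5).const_mul 12)).const_mul (-4 * k ^ 2)
    refine this.congr_deriv ?_
    ring
  -- chain rule along an affine line
  have key : ∀ (g g' : ℝ → ℝ), (∀ ξ ∈ I, HasDerivAt g (g' ξ) ξ) →
      ∀ (ℓ : ℝ → ℝ) (a s : ℝ), HasDerivAt ℓ a s → ℓ s ∈ I →
      HasDerivAt (fun s' => g (ℓ s')) (a * g' (ℓ s)) s := by
    intro g g' hg ℓ a s hℓ hs
    have := (hg _ hs).comp s hℓ
    rw [mul_comm] at this
    exact this
  -- affine derivative facts
  have hlx : ∀ s : ℝ, HasDerivAt (fun s' : ℝ => c * t + k * s' + m * y) k s := by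
    intro s
    simpa using (((hasDerivAt_id s).const_mul k).const_add (c * t)).add_const (m * y)
  have hly : ∀ s : ℝ, HasDerivAt (fun s' : ℝ => c * t + k * x + m * s') m s := by
    intro s
    simpa using ((hasDerivAt_id s).const_mul m).const_add (c * t + k * x)
  have hlt : ∀ (X : ℝ) (s : ℝ), HasDerivAt (fun s' : ℝ => c * s' + k * X + m * y) c s := by
    intro X s
    simpa using (((hasDerivAt_id s).const_mul c).add_const (k * X)).add_const (m * y)
  -- open sets of good parameters
  have hSx : IsOpen {x' : ℝ | c * t + k * x' + m * y ∈ I} := by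
    have hc : Continuous fun x' : ℝ => c * t + k * x' + m * y := by continuity
    exact hI.preimage hc
  have hSy : IsOpen {y' : ℝ | c * t + k * x + m * y' ∈ I} := by
    have hc : Continuous fun y' : ℝ => c * t + k * x + m * y' := by continuity
    exact hI.preimage hc
  -- rewrite u away
  simp only [hu]
  -- first x-derivative
  have hux : ∀ x' : ℝ, c * t + k * x' + m * y ∈ I →
      deriv (fun x'' : ℝ => (m ^ 2 - 8 * σ * k ^ 4 - k * c) / (6 * k ^ 2)
        - 2 * k ^ 2 * Φ (c * t + k * x'' + m * y) ^ 2) x'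
      = k * (-4 * k ^ 2 * (σ * Φ (c * t + k * x' + m * y)
          + Φ (c * t + k * x' + m * y) ^ 3)) := by
    intro x' h
    exact (key _ _ hd0 _ k x' (hlx x') h).deriv
  -- second x-derivative
  have hux2 : ∀ x' : ℝ, c * t + k * x' + m * y ∈ I →
      deriv (deriv (fun x'' : ℝ => (m ^ 2 - 8 * σ * k ^ 4 - k * c) / (6 * k ^ 2)
        - 2 * k ^ 2 * Φ (c * t + k * x'' + m * y) ^ 2)) x'
      = k * (k * (-4 * k ^ 2 * (σ ^ 2 + 4 * σ * Φ (c * t + k * x' + m * y) ^ 2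
          + 3 * Φ (c * t + k * x' + m * y) ^ 4))) := by
    intro x' h
    have hev : deriv (fun x'' : ℝ => (m ^ 2 - 8 * σ * k ^ 4 - k * c) / (6 * k ^ 2)
        - 2 * k ^ 2 * Φ (c * t + k * x'' + m * y) ^ 2)
        =ᶠ[nhds x'] fun x'' => k * (-4 * k ^ 2 * (σ * Φ (c * t + k * x'' + m * y)
          + Φ (c * t + k * x'' + m * y) ^ 3)) := by
      filter_upwards [hSx.mem_nhds h] with z hz using hux z hz
    rw [hev.deriv_eq]
    exact ((key _ _ hd1 _ k x' (hlx x') h).const_mul k).deriv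
  -- third x-derivative
  have hux3 : ∀ x' : ℝ, c * t + k * x' + m * y ∈ I →
      deriv (deriv (deriv (fun x'' : ℝ => (m ^ 2 - 8 * σ * k ^ 4 - k * c) / (6 * k ^ 2)
        - 2 * k ^ 2 * Φ (c * t + k * x'' + m * y) ^ 2))) x'
      = k * (k * (k * (-4 * k ^ 2 * (8 * σ ^ 2 * Φ (c * t + k * x' + m * y)
          + 20 * σ * Φ (c * t + k * x' + m * y) ^ 3
          + 12 * Φ (c * t + k * x' + m * y) ^ 5)))) := by
    intro x' h
    have hev : deriv (deriv (fun x'' : ℝ => (m ^ 2 - 8 * σ * k ^ 4 - k * c) / (6 * k ^ 2)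
        - 2 * k ^ 2 * Φ (c * t + k * x'' + m * y) ^ 2))
        =ᶠ[nhds x'] fun x'' => k * (k * (-4 * k ^ 2 * (σ ^ 2
          + 4 * σ * Φ (c * t + k * x'' + m * y) ^ 2
          + 3 * Φ (c * t + k * x'' + m * y) ^ 4))) := by
      filter_upwards [hSx.mem_nhds h] with z hz using hux2 z hz
    rw [hev.deriv_eq]
    exact (((key _ _ hd2 _ k x' (hlx x') h).const_mul k).const_mul k).deriv
  -- t-derivative
  have hut : ∀ x' : ℝ, c * t + k * x' + m * y ∈ I →
      deriv (fun t' : ℝ => (m ^ 2 - 8 * σ * k ^ 4 - k * c) / (6 * k ^ 2)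
        - 2 * k ^ 2 * Φ (c * t' + k * x' + m * y) ^ 2) t
      = c * (-4 * k ^ 2 * (σ * Φ (c * t + k * x' + m * y)
          + Φ (c * t + k * x' + m * y) ^ 3)) := by
    intro x' h
    exact (key _ _ hd0 _ c t (hlt x' t) h).deriv
  -- y-derivative
  have huy : ∀ y' : ℝ, c * t + k * x + m * y' ∈ I →
      deriv (fun y'' : ℝ => (m ^ 2 - 8 * σ * k ^ 4 - k * c) / (6 * k ^ 2)
        - 2 * k ^ 2 * Φ (c * t + k * x + m * y'') ^ 2) y'
      = m * (-4 * k ^ 2 * (σ * Φ (c * t + k * x + m * y')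
          + Φ (c * t + k * x + m * y') ^ 3)) := by
    intro y' h
    exact (key _ _ hd0 _ m y' (hly y') h).deriv
  -- LHS
  have hLHS : deriv (deriv (fun y'' : ℝ => (m ^ 2 - 8 * σ * k ^ 4 - k * c) / (6 * k ^ 2)
      - 2 * k ^ 2 * Φ (c * t + k * x + m * y'') ^ 2)) y
      = m * (m * (-4 * k ^ 2 * (σ ^ 2 + 4 * σ * Φ (c * t + k * x + m * y) ^ 2
          + 3 * Φ (c * t + k * x + m * y) ^ 4))) := by
    have hev : deriv (fun y'' : ℝ => (m ^ 2 - 8 * σ * k ^ 4 - k * c) / (6 * k ^ 2)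
        - 2 * k ^ 2 * Φ (c * t + k * x + m * y'') ^ 2)
        =ᶠ[nhds y] fun y' => m * (-4 * k ^ 2 * (σ * Φ (c * t + k * x + m * y')
          + Φ (c * t + k * x + m * y') ^ 3)) := by
      filter_upwards [hSy.mem_nhds hmem] with z hz using huy z hz
    rw [hev.deriv_eq]
    exact ((key _ _ hd1 _ m y (hly y) hmem).const_mul m).deriv
  -- RHS inner function is eventually a nice function of x'
  have hevR : (fun x' : ℝ =>
        deriv (fun t' : ℝ => (m ^ 2 - 8 * σ * k ^ 4 - k * c) / (6 * k ^ 2)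
          - 2 * k ^ 2 * Φ (c * t' + k * x' + m * y) ^ 2) t
        + 6 * ((m ^ 2 - 8 * σ * k ^ 4 - k * c) / (6 * k ^ 2)
            - 2 * k ^ 2 * Φ (c * t + k * x' + m * y) ^ 2)
          * deriv (fun x'' : ℝ => (m ^ 2 - 8 * σ * k ^ 4 - k * c) / (6 * k ^ 2)
            - 2 * k ^ 2 * Φ (c * t + k * x'' + m * y) ^ 2) x'
        + deriv (deriv (deriv (fun x'' : ℝ => (m ^ 2 - 8 * σ * k ^ 4 - k * c) / (6 * k ^ 2)
            - 2 * k ^ 2 * Φ (c * t + k * x'' + m * y) ^ 2))) x')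
      =ᶠ[nhds x] fun x' : ℝ =>
        c * (-4 * k ^ 2 * (σ * Φ (c * t + k * x' + m * y)
          + Φ (c * t + k * x' + m * y) ^ 3))
        + 6 * (((m ^ 2 - 8 * σ * k ^ 4 - k * c) / (6 * k ^ 2)
            - 2 * k ^ 2 * Φ (c * t + k * x' + m * y) ^ 2)
          * (k * (-4 * k ^ 2 * (σ * Φ (c * t + k * x' + m * y)
            + Φ (c * t + k * x' + m * y) ^ 3))))
        + k * (k * (k * (-4 * k ^ 2 * (8 * σ ^ 2 * Φ (c * t + k * x' + m * y)
          + 20 * σ * Φ (c * t + k * x' + m * y) ^ 3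
          + 12 * Φ (c * t + k * x' + m * y) ^ 5)))) := by
    filter_upwards [hSx.mem_nhds hmem] with z hz
    rw [hut z hz, hux z hz, hux3 z hz]
    ring
  rw [hLHS, hevR.deriv_eq]
  -- derivative of the nice RHS function
  have h1 := (key _ _ hd1 _ k x (hlx x) hmem).const_mul c
  have h2 := (((key _ _ hd0 _ k x (hlx x) hmem).mul
      ((key _ _ hd1 _ k x (hlx x) hmem).const_mul k))).const_mul 6
  have h3 := ((((key _ _ hd3 _ k x (hlx x) hmem).const_mul k).const_mul k).const_mul k)
  have hR := ((h1.add h2).add h3).deriv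
  simp only [Pi.add_def, Pi.mul_def] at hR
  rw [hR]
  -- the algebraic identity
  have hk2 : k ^ 2 ≠ 0 := pow_ne_zero 2 hk
  field_simp
  ring
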